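/- Let K ≥ 2, 1 > θ_1 > θ_2 > … > θ_K > 0, c > 0, ε ∈ (0,1/2), and assume θ_1 ≠ μ((1,2)). Let u* = (1) and S = {2,…,K} if θ_1 > μ((1,2)), and u* = (1,2) and S = {3,…,K} otherwise; let μ* = max(θ_1, μ((1,2))). Set θ̄ := θ_2 if u* = (1,2), and θ̄ := min(θ_1, (c+εθ_1)/p0(θ_1)) if u* = (1); then θ_k < θ̄ for all k ∈ S. For each k ∈ S and q ∈ (θ_k, 1), define D_{(k)}(q) := I(θ_k,q); D_{(k,1)}(q) := (1−ε)θ_k log(θ_k/q) + ε(1−θ_k) log((1−θ_k)/(1−q)) + p0(θ_k) log(p0(θ_k)/p0(q)); D_{(k,1,k)}(q) := (1−p0(θ_k)) log((1−p0(θ_k))/(1−p0(q))) + εθ_k log(θ_k/q) + (1−ε)(1−θ_k) log((1−θ_k)/(1−q)); D_{(k,1,1)}(q) := (1−p0(θ_k)) log((1−p0(θ_k))/(1−p0(q))) + p0(θ_k) log(p0(θ_k)/p0(q)). Consider minimizing Σ_{k∈S} Σ_{u∈U_1(k)} η_{k,u}(μ* − μ(u)) over nonnegative η subject to Σ_{u∈U_1(k)}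 η_{k,u} D_u(θ̄) ≥ 1 for every k ∈ S, where U_1(k) = {(k), (k,1), (k,1,k), (k,1,1)}. Then each D_u(θ̄) > 0 and the minimum value equals C_ε(θ) = Σ_{k∈S} min_{u∈U_1(k)} (μ* − μ(u))/D_u(θ̄). -/
import Mathlib


noncomputable section

/-- `p0 ε x = ε x + (1−ε)(1−x)`: probability that the ε-noisy measurement of a
Bernoulli(x) arm returns 0. -/
def p0 (ε x : ℝ) : ℝ := ε * x + (1 - ε) * (1 - x)

/-- A static policy: either play arm `k` directly, or measure arm `k` and play
arm `l` if the measurement is 1 and arm `m` if it is 0. -/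
inductive Policy where
  | play (k : ℕ)
  | meas (k l m : ℕ)
deriving DecidableEq

/-- Mean reward `μ(u)` of a static policy `u`, with arm means `θ`, noise level `ε`,
and measurement cost `c`. -/
def reward (θ : ℕ → ℝ) (ε c : ℝ) : Policy → ℝ
  | .play k => θ k
  | .meas k l m =>
      -c + (if l = k then (1 - ε) * θ k else (1 - p0 ε (θ k)) * θ l)
         + (if m = k then ε * θ k else p0 ε (θ k) * θ m)

/-- `I(p,q)`: KL divergence between Bernoulli(p) and Bernoulli(q). -/
def klBer (p q : ℝ) : ℝ :=
  p * Real.log (p / q) + (1 - p) * Real.log ((1 - p) / (1 - q))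

/-- The four exploratory policies `U_1(k) = {(k), (k,1), (k,1,k), (k,1,1)}`. -/
def pol9 (k : ℕ) : Fin 4 → Policy :=
  ![.play k, .meas k k 1, .meas k 1 k, .meas k 1 1]

/-- The KL divergences `D_u(q) = KL(ν_θ(u) ‖ ν_{(θ^{(−k)},q)}(u))` for the four policies
of `U_1(k)`. -/
def D9 (θ : ℕ → ℝ) (ε : ℝ) (k : ℕ) (q : ℝ) : Fin 4 → ℝ :=
  ![klBer (θ k) q,
    (1 - ε) * θ k * Real.log (θ k / q)
      + ε * (1 - θ k) * Real.log ((1 - θ k) / (1 - q))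
      + p0 ε (θ k) * Real.log (p0 ε (θ k) / p0 ε q),
    (1 - p0 ε (θ k)) * Real.log ((1 - p0 ε (θ k)) / (1 - p0 ε q))
      + ε * θ k * Real.log (θ k / q)
      + (1 - ε) * (1 - θ k) * Real.log ((1 - θ k) / (1 - q)),
    (1 - p0 ε (θ k)) * Real.log ((1 - p0 ε (θ k)) / (1 - p0 ε q))
      + p0 ε (θ k) * Real.log (p0 ε (θ k) / p0 ε q)]
-- aux lemmas to insert
lemma gibbs_ge {a b : ℝ} (ha : 0 < a) (hb : 0 < b) : a - b ≤ a * Real.log (a / b) := by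
  have h := Real.log_le_sub_one_of_pos (show (0:ℝ) < b / a by positivity)
  have h2 : a * Real.log (b / a) ≤ a * (b / a - 1) := mul_le_mul_of_nonneg_left h ha.le
  have h3 : a * (b / a - 1) = b - a := by field_simp
  have h4 : Real.log (a / b) = - Real.log (b / a) := by
    rw [← Real.log_inv]; congr 1; rw [inv_div]
  rw [h4]; linarith

lemma gibbs_gt {a b : ℝ} (ha : 0 < a) (hb : 0 < b) (hab : a ≠ b) :
    a - b < a * Real.log (a / b) := by
  have hne : b / a ≠ 1 := by
    intro h; exact hab ((div_eq_one_iff_eq ha.ne').1 h).symm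
  have h := Real.log_lt_sub_one_of_pos (show (0:ℝ) < b / a by positivity) hne
  have h2 : a * Real.log (b / a) < a * (b / a - 1) := by
    exact (mul_lt_mul_iff_right₀ ha).2 h
  have h3 : a * (b / a - 1) = b - a := by field_simp
  have h4 : Real.log (a / b) = - Real.log (b / a) := by
    rw [← Real.log_inv]; congr 1; rw [inv_div]
  rw [h4]; linarith
lemma gibbs_mul_ge {a b c : ℝ} (ha : 0 < a) (hb : 0 < b) (hc : 0 ≤ c) :
    c * (a - b) ≤ c * a * Real.log (a / b) := by
  have h := gibbs_ge ha hb
  have := mul_le_mul_of_nonneg_left h hc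
  nlinarith

lemma gibbs_mul_gt {a b c : ℝ} (ha : 0 < a) (hb : 0 < b) (hab : a ≠ b) (hc : 0 < c) :
    c * (a - b) < c * a * Real.log (a / b) := by
  have h := gibbs_gt ha hb hab
  have := (mul_lt_mul_iff_right₀ hc).2 h
  nlinarith

lemma D9_pos (θ : ℕ → ℝ) (ε : ℝ) (k : ℕ) (q : ℝ)
    (hε0 : 0 < ε) (hε : ε < 1/2) (hp0 : 0 < θ k) (hp1 : θ k < 1)
    (hpq : θ k < q) (hq1 : q < 1) (i : Fin 4) : 0 < D9 θ ε k q i := by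
  set p := θ k with hp
  have hq0 : 0 < q := hp0.trans hpq
  have h1p : 0 < 1 - p := by linarith
  have h1q : 0 < 1 - q := by linarith
  have hε1 : 0 < 1 - ε := by linarith
  have hpne : p ≠ q := ne_of_lt hpq
  have hP : p0 ε p = (1 - ε) - (1 - 2*ε) * p := by simp [p0]; ring
  have hQ : p0 ε q = (1 - ε) - (1 - 2*ε) * q := by simp [p0]; ring
  have hp0p : 0 < p0 ε p := by rw [hP]; nlinarith
  have hp0q : 0 < p0 ε q := by rw [hQ]; nlinarith
  have h1p0p : 0 < 1 - p0 ε p := by rw [hP]; nlinarith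
  have h1p0q : 0 < 1 - p0 ε q := by rw [hQ]; nlinarith
  have hABeq : p0 ε p - p0 ε q = (1 - 2*ε) * (q - p) := by rw [hP, hQ]; ring
  have hABne : p0 ε p ≠ p0 ε q := by
    intro h; rw [h, sub_self] at hABeq
    have : q - p = 0 := by
      rcases mul_eq_zero.1 hABeq.symm with h' | h'
      · exfalso; nlinarith
      · exact h'
    exact hpne (by linarith)
  have h1ABne : 1 - p0 ε p ≠ 1 - p0 ε q := by
    intro h; exact hABne (by linarith)
  fin_cases i
  · simp only [D9]
    show 0 < klBer p q
    simp only [klBer]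
    have g1 := gibbs_gt hp0 hq0 hpne
    have g2 := gibbs_ge h1p h1q
    linarith
  · simp only [D9]
    show 0 < (1 - ε) * p * Real.log (p / q) + ε * (1 - p) * Real.log ((1 - p) / (1 - q))
      + p0 ε p * Real.log (p0 ε p / p0 ε q)
    have g1 := gibbs_mul_gt hp0 hq0 hpne hε1
    have g2 := gibbs_mul_ge h1p h1q hε0.le
    have g3 := gibbs_ge hp0p hp0q
    linarith
  · simp only [D9]
    show 0 < (1 - p0 ε p) * Real.log ((1 - p0 ε p) / (1 - p0 ε q))
      + ε * p * Real.log (p / q) + (1 - ε) * (1 - p) * Real.log ((1 - p) / (1 - q))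
    have g1 := gibbs_gt h1p0p h1p0q h1ABne
    have g2 := gibbs_mul_ge hp0 hq0 hε0.le
    have g3 := gibbs_mul_ge h1p h1q hε1.le
    linarith
  · simp only [D9]
    show 0 < (1 - p0 ε p) * Real.log ((1 - p0 ε p) / (1 - p0 ε q))
      + p0 ε p * Real.log (p0 ε p / p0 ε q)
    have g1 := gibbs_gt h1p0p h1p0q h1ABne
    have g2 := gibbs_ge hp0p hp0q
    linarith

lemma lp_least (S : Finset ℕ) (r D : ℕ → Fin 4 → ℝ)
    (hD : ∀ k ∈ S, ∀ i, 0 < D k i) (hr : ∀ k ∈ S, ∀ i, 0 ≤ r k i) :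
    IsLeast {x : ℝ | ∃ η : ℕ → Fin 4 → ℝ, (∀ k i, 0 ≤ η k i) ∧
        (∀ k ∈ S, 1 ≤ ∑ i : Fin 4, η k i * D k i) ∧
        x = ∑ k ∈ S, ∑ i : Fin 4, η k i * r k i}
      (∑ k ∈ S, ⨅ i : Fin 4, r k i / D k i) := by
  have hmin : ∀ k : ℕ, ∃ i : Fin 4, ∀ j, r k i / D k i ≤ r k j / D k j :=
    fun k => Finite.exists_min _
  choose i0 hi0 using hmin
  have hinf : ∀ k, (⨅ i : Fin 4, r k i / D k i) = r k (i0 k) / D k (i0 k) := fun k =>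
    le_antisymm (ciInf_le (Finite.bddBelow_range _) _) (le_ciInf (hi0 k))
  constructor
  · refine ⟨fun k i => if k ∈ S ∧ i = i0 k then (D k (i0 k))⁻¹ else 0, ?_, ?_, ?_⟩
    · intro k i
      dsimp only
      split_ifs with h
      · exact inv_nonneg.2 (hD k h.1 _).le
      · exact le_refl 0
    · intro k hk
      rw [Finset.sum_eq_single (i0 k)]
      · simp only [hk, and_self, if_pos, true_and, if_true]
        rw [inv_mul_cancel₀ (hD k hk (i0 k)).ne']
      · intro b _ hb
        simp [hb]
      · simp
    · refine (Finset.sum_congr rfl fun k hk => ?_).symm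
      rw [hinf k, Finset.sum_eq_single (i0 k)]
      · simp only [hk, and_self, if_pos, true_and, if_true]
        rw [div_eq_inv_mul]
      · intro b _ hb; simp [hb]
      · simp
  · rintro x ⟨η, hη, hcon, rfl⟩
    refine Finset.sum_le_sum fun k hk => ?_
    rw [hinf k]
    set m := r k (i0 k) / D k (i0 k) with hm
    have hm0 : 0 ≤ m := div_nonneg (hr k hk _) (hD k hk _).le
    have h1 : m ≤ m * ∑ i : Fin 4, η k i * D k i :=
      le_mul_of_one_le_right hm0 (hcon k hk)
    have h2 : m * ∑ i : Fin 4, η k i * D k i = ∑ i : Fin 4, η k i * (m * D k i) := by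
      rw [Finset.mul_sum]; exact Finset.sum_congr rfl fun i _ => by ring
    have h3 : ∀ i ∈ Finset.univ, η k i * (m * D k i) ≤ η k i * r k i := by
      intro i _
      refine mul_le_mul_of_nonneg_left ?_ (hη k i)
      exact (le_div_iff₀ (hD k hk i)).1 (hi0 k i)
    calc m ≤ ∑ i : Fin 4, η k i * (m * D k i) := by rw [←h2]; exact h1
      _ ≤ ∑ i : Fin 4, η k i * r k i := Finset.sum_le_sum h3

open Classical in
/-- The regret lower-bound optimization problem of Theorem 2 (imperfect
measurements): with `u* = (1)`, `S = {2,…,K}`, `θ̄ = min(θ_1,(c+εθ_1)/p0(θ_1))` when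
`θ_1 > μ((1,2))`, and `u* = (1,2)`, `S = {3,…,K}`, `θ̄ = θ_2` otherwise, we have
`θ_k < θ̄` and `D_u(θ̄) > 0` for all `k ∈ S`, `u ∈ U_1(k)`, and minimizing
`Σ_{k∈S} Σ_{u∈U_1(k)} η_{k,u}(μ* − μ(u))` over nonnegative `η` subject to
`Σ_{u∈U_1(k)} η_{k,u} D_u(θ̄) ≥ 1` for every `k ∈ S` has minimum value
`C_ε(θ) = Σ_{k∈S} min_{u∈U_1(k)} (μ* − μ(u))/D_u(θ̄)`. -/
theorem stmt9 (K : ℕ) (hK : 2 ≤ K) (θ : ℕ → ℝ)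
    (h1 : θ 1 < 1) (hKpos : 0 < θ K)
    (hmono : ∀ i, 1 ≤ i → i < K → θ (i + 1) < θ i)
    (c ε : ℝ) (hc : 0 < c) (hε0 : 0 < ε) (hε : ε < 1 / 2)
    (hne : θ 1 ≠ reward θ ε c (.meas 1 1 2)) :
    let μ12 := reward θ ε c (.meas 1 1 2)
    let μstar := max (θ 1) μ12
    let S : Finset ℕ := if θ 1 > μ12 then Finset.Icc 2 K else Finset.Icc 3 K
    let θbar : ℝ :=
      if θ 1 > μ12 then min (θ 1) ((c + ε * θ 1) / p0 ε (θ 1)) else θ 2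
    (∀ k ∈ S, θ k < θbar) ∧
    (∀ k ∈ S, ∀ i : Fin 4, 0 < D9 θ ε k θbar i) ∧
    IsLeast
      {x : ℝ | ∃ η : ℕ → Fin 4 → ℝ, (∀ k i, 0 ≤ η k i) ∧
        (∀ k ∈ S, 1 ≤ ∑ i : Fin 4, η k i * D9 θ ε k θbar i) ∧
        x = ∑ k ∈ S, ∑ i : Fin 4, η k i * (μstar - reward θ ε c (pol9 k i))}
      (∑ k ∈ S, ⨅ i : Fin 4, (μstar - reward θ ε c (pol9 k i)) / D9 θ ε k θbar i) := by
  intro μ12 μstar S θbar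
  -- basic monotonicity facts
  have hθanti : ∀ i j : ℕ, 1 ≤ i → i ≤ j → j ≤ K → θ j ≤ θ i := by
    intro i j hi hij hjK
    induction j, hij using Nat.le_induction with
    | base => exact le_refl _
    | succ n hn ih =>
      have hnK : n < K := by omega
      have := hmono n (le_trans hi hn) hnK
      exact le_trans this.le (ih (by omega))
  have ht2 : θ 2 < θ 1 := hmono 1 le_rfl (by omega)
  have hθpos : ∀ k, 1 ≤ k → k ≤ K → 0 < θ k :=
    fun k h1k hkK => lt_of_lt_of_le hKpos (hθanti k K h1k hkK le_rfl)
  have hμ12eq : μ12 = -c + (1 - ε) * θ 1 + p0 ε (θ 1) * θ 2 := by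
    show reward θ ε c (.meas 1 1 2) = _
    norm_num [reward]
  -- case analysis giving the key structural facts
  have hμ12eq' : μ12 = -c + (1 - ε) * θ 1 + (ε * θ 1 + (1 - ε) * (1 - θ 1)) * θ 2 := by
    rw [hμ12eq]; simp [p0]
  obtain ⟨hS2, hbar1, hmain1⟩ :
      (∀ k ∈ S, 2 ≤ k ∧ k ≤ K ∧ θ k ≤ θ 2) ∧ θbar < 1 ∧ (∀ k ∈ S, θ k < θbar) := by
    by_cases hc1 : θ 1 > μ12
    · have hS : S = Finset.Icc 2 K := if_pos hc1
      have hbar : θbar = min (θ 1) ((c + ε * θ 1) / p0 ε (θ 1)) := if_pos hc1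
      have h1pos := hθpos 1 le_rfl (by omega)
      have hp01 : 0 < p0 ε (θ 1) := by simp only [p0]; nlinarith
      have hdiv : θ 2 < (c + ε * θ 1) / p0 ε (θ 1) := by
        rw [lt_div_iff₀ hp01]
        have : μ12 < θ 1 := hc1
        rw [hμ12eq] at this
        nlinarith
      refine ⟨?_, ?_, ?_⟩
      · intro k hk
        rw [hS, Finset.mem_Icc] at hk
        exact ⟨hk.1, hk.2, hθanti 2 k (by omega) hk.1 hk.2⟩
      · rw [hbar]; exact lt_of_le_of_lt (min_le_left _ _) h1
      · intro k hk
        rw [hS, Finset.mem_Icc] at hk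
        have : θ k ≤ θ 2 := hθanti 2 k (by omega) hk.1 hk.2
        rw [hbar]; exact lt_of_le_of_lt this (lt_min ht2 hdiv)
    · have hS : S = Finset.Icc 3 K := if_neg hc1
      have hbar : θbar = θ 2 := if_neg hc1
      refine ⟨?_, ?_, ?_⟩
      · intro k hk
        rw [hS, Finset.mem_Icc] at hk
        exact ⟨by omega, hk.2, hθanti 2 k (by omega) (by omega) hk.2⟩
      · rw [hbar]; linarith
      · intro k hk
        rw [hS, Finset.mem_Icc] at hk
        have h3K : 2 < K := by omega
        have h32 : θ 3 < θ 2 := hmono 2 (by omega) h3K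
        have : θ k ≤ θ 3 := hθanti 3 k (by omega) hk.1 hk.2
        rw [hbar]; linarith
  have hDpos : ∀ k ∈ S, ∀ i : Fin 4, 0 < D9 θ ε k θbar i := by
    intro k hk i
    obtain ⟨hk2, hkK, hkθ2⟩ := hS2 k hk
    exact D9_pos θ ε k θbar hε0 (by linarith) (hθpos k (by omega) hkK)
      (by linarith) (hmain1 k hk) hbar1 i
  refine ⟨hmain1, hDpos, ?_⟩
  have hr : ∀ k ∈ S, ∀ i : Fin 4, 0 ≤ μstar - reward θ ε c (pol9 k i) := by
    intro k hk i
    obtain ⟨hk2, hkK, hkθ2⟩ := hS2 k hk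
    have hkpos := hθpos k (by omega) hkK
    have hm1 : θ 1 ≤ μstar := le_max_left _ _
    have hm2 : μ12 ≤ μstar := le_max_right _ _
    have hk1 : (1 : ℕ) ≠ k := by omega
    have h2pos : 0 < θ 2 := by linarith
    fin_cases i
    · show 0 ≤ μstar - reward θ ε c (.play k)
      simp only [reward]; linarith
    · show 0 ≤ μstar - reward θ ε c (.meas k k 1)
      have e1 : reward θ ε c (.meas k k 1)
          = -c + (1-ε) * θ k + (ε * θ k + (1-ε) * (1-θ k)) * θ 1 := by
        simp [reward, p0, if_neg hk1]
        try ring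
      rw [e1]
      nlinarith [hμ12eq', hm2, mul_nonneg (show (0:ℝ) ≤ (1-ε) - (1-2*ε) * θ 1 by nlinarith)
        (show (0:ℝ) ≤ θ 2 - θ k by linarith)]
    · show 0 ≤ μstar - reward θ ε c (.meas k 1 k)
      have e2 : reward θ ε c (.meas k 1 k)
          = -c + (1 - (ε * θ k + (1-ε) * (1-θ k))) * θ 1 + ε * θ k := by
        simp [reward, p0, if_neg hk1]
        try ring
      rw [e2]
      nlinarith [hμ12eq', hm2, mul_nonneg (show (0:ℝ) ≤ (1-2*ε) * (1 - θ 1) by nlinarith) h2pos.le,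
        mul_nonneg (hθpos 1 le_rfl (by omega)).le
          (show (0:ℝ) ≤ (1-2*ε) * (1 - θ k) by nlinarith),
        mul_nonneg hε0.le (show (0:ℝ) ≤ θ 2 - θ k by linarith)]
    · show 0 ≤ μstar - reward θ ε c (.meas k 1 1)
      have e3 : reward θ ε c (.meas k 1 1)
          = -c + (1 - (ε * θ k + (1-ε) * (1-θ k))) * θ 1
            + (ε * θ k + (1-ε) * (1-θ k)) * θ 1 := by
        simp [reward, p0, if_neg hk1]
        try ring
      rw [e3]
      nlinarith [hm1]
  exact lp_least S (fun k i => μstar - reward θ ε c (pol9 k i))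
    (fun k i => D9 θ ε k θbar i) hDpos hr
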